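/- Let k ∈ ℂ, let y = (y₁,y₂,y₃) ∈ ℝ³ with y₃ ≠ 0, and let j = (j₁,j₂,j₃) ∈ ℝ³ with image current j_R = (−j₁,−j₂,j₃) = −R j. Define the vector field F(x) = G_k(x,y) j + G_k(x, R y) j_R on ℝ³ \ {y, R y}. Then for every x with x₃ = 0, the first two components of ∇×(∇×F)(x) vanish; that is, the tangential part of the double curl of F vanishes on the plane x₃ = 0. -/

import Mathlib

noncomputable section

open MeasureTheory

/-- The Euclidean norm on `ℝ³` (realized as `Fin 3 → ℝ`). -/
def enorm3 (x : Fin 3 → ℝ) : ℝ := Real.sqrt (x 0 ^ 2 + x 1 ^ 2 + x 2 ^ 2)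

/-- The Helmholtz Green's function `G_k(x,y) = exp(i k ‖x−y‖)/(4π ‖x−y‖)`. -/
def G (k : ℂ) (x y : Fin 3 → ℝ) : ℂ :=
  Complex.exp (Complex.I * k * (enorm3 (x - y) : ℂ)) /
    (4 * (Real.pi : ℂ) * (enorm3 (x - y) : ℂ))

/-- Reflection across the plane `x₃ = 0`: `R(x₁,x₂,x₃) = (x₁,x₂,−x₃)`. -/
def refl3 (x : Fin 3 → ℝ) : Fin 3 → ℝ := ![x 0, x 1, -x 2]

/-- Partial derivative in the `i`-th coordinate direction. -/
def pd (i : Fin 3) (f : (Fin 3 → ℝ) → ℂ) (x : Fin 3 → ℝ) : ℂ :=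
  fderiv ℝ f x (Pi.single i 1)

/-- The curl `∇×F = (∂₂F₃−∂₃F₂, ∂₃F₁−∂₁F₃, ∂₁F₂−∂₂F₁)` of a vector field. -/
def curl (F : (Fin 3 → ℝ) → Fin 3 → ℂ) (x : Fin 3 → ℝ) : Fin 3 → ℂ :=
  ![pd 1 (fun z => F z 2) x - pd 2 (fun z => F z 1) x,
    pd 2 (fun z => F z 0) x - pd 0 (fun z => F z 2) x,
    pd 0 (fun z => F z 1) x - pd 1 (fun z => F z 0) x]

-- aux
lemma refl3_invol (x : Fin 3 → ℝ) : refl3 (refl3 x) = x := by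
  funext i; fin_cases i <;> simp [refl3]

def sigmaLin : (Fin 3 → ℝ) ≃ₗ[ℝ] (Fin 3 → ℝ) where
  toFun := refl3
  invFun := refl3
  map_add' a b := by funext i; fin_cases i <;> simp [refl3] <;> ring
  map_smul' c a := by funext i; fin_cases i <;> simp [refl3] <;> ring
  left_inv := refl3_invol
  right_inv := refl3_invol

def sigmaL : (Fin 3 → ℝ) ≃L[ℝ] (Fin 3 → ℝ) := sigmaLin.toContinuousLinearEquiv

lemma sigmaL_apply (x : Fin 3 → ℝ) : sigmaL x = refl3 x := rfl

lemma sigmaL_single0 : sigmaL (Pi.single (0 : Fin 3) (1:ℝ)) = Pi.single (0 : Fin 3) (1:ℝ) := by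
  funext i; fin_cases i <;> simp [sigmaL_apply, refl3, Pi.single_apply]

lemma sigmaL_single1 : sigmaL (Pi.single (1 : Fin 3) (1:ℝ)) = Pi.single (1 : Fin 3) (1:ℝ) := by
  funext i; fin_cases i <;> simp [sigmaL_apply, refl3, Pi.single_apply]

lemma sigmaL_single2 : sigmaL (Pi.single (2 : Fin 3) (1:ℝ)) = -Pi.single (2 : Fin 3) (1:ℝ) := by
  funext i; fin_cases i <;> simp [sigmaL_apply, refl3, Pi.single_apply]

lemma pd_comp_refl (f : (Fin 3 → ℝ) → ℂ) (i : Fin 3) (x : Fin 3 → ℝ) :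
    pd i (fun z => f (refl3 z)) x = (if i = 2 then -1 else 1 : ℂ) * pd i f (refl3 x) := by
  have h : (fun z => f (refl3 z)) = f ∘ sigmaL := rfl
  unfold pd
  rw [h, sigmaL.comp_right_fderiv, ContinuousLinearMap.comp_apply]
  fin_cases i
  · show (fderiv ℝ f (sigmaL x)) (sigmaL (Pi.single (0:Fin 3) (1:ℝ))) =
      (if (0:Fin 3) = 2 then -1 else 1 : ℂ) * (fderiv ℝ f (refl3 x)) (Pi.single (0:Fin 3) (1:ℝ))
    rw [sigmaL_single0]; simp [sigmaL_apply]
  · show (fderiv ℝ f (sigmaL x)) (sigmaL (Pi.single (1:Fin 3) (1:ℝ))) =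
      (if (1:Fin 3) = 2 then -1 else 1 : ℂ) * (fderiv ℝ f (refl3 x)) (Pi.single (1:Fin 3) (1:ℝ))
    rw [sigmaL_single1]; simp [sigmaL_apply]
  · show (fderiv ℝ f (sigmaL x)) (sigmaL (Pi.single (2:Fin 3) (1:ℝ))) =
      (if (2:Fin 3) = 2 then -1 else 1 : ℂ) * (fderiv ℝ f (refl3 x)) (Pi.single (2:Fin 3) (1:ℝ))
    rw [sigmaL_single2, map_neg]; simp [sigmaL_apply]

lemma pd_neg (f : (Fin 3 → ℝ) → ℂ) (i : Fin 3) (x : Fin 3 → ℝ) :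
    pd i (fun z => -f z) x = -pd i f x := by
  unfold pd; rw [fderiv_fun_neg]; simp

lemma pd_refl_eval (f : (Fin 3 → ℝ) → ℂ) (i : Fin 3) (x : Fin 3 → ℝ) :
    pd i f (refl3 x) = (if i = 2 then -1 else 1 : ℂ) * pd i (fun z => f (refl3 z)) x := by
  rw [pd_comp_refl]
  fin_cases i <;> simp

lemma enorm3_refl_sub (z w : Fin 3 → ℝ) : enorm3 (refl3 z - w) = enorm3 (z - refl3 w) := by
  unfold enorm3
  simp only [Pi.sub_apply, refl3, Matrix.cons_val_zero, Matrix.cons_val_one, Matrix.head_cons,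
    Matrix.cons_val_two, Matrix.tail_cons]
  ring_nf

lemma G_refl (kk : ℂ) (z w : Fin 3 → ℝ) : G kk (refl3 z) w = G kk z (refl3 w) := by
  unfold G; rw [enorm3_refl_sub]

lemma curl_apply0 (F : (Fin 3 → ℝ) → Fin 3 → ℂ) (x : Fin 3 → ℝ) :
    curl F x 0 = pd 1 (fun z => F z 2) x - pd 2 (fun z => F z 1) x := rfl
lemma curl_apply1 (F : (Fin 3 → ℝ) → Fin 3 → ℂ) (x : Fin 3 → ℝ) :
    curl F x 1 = pd 2 (fun z => F z 0) x - pd 0 (fun z => F z 2) x := rfl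
lemma curl_apply2 (F : (Fin 3 → ℝ) → Fin 3 → ℂ) (x : Fin 3 → ℝ) :
    curl F x 2 = pd 0 (fun z => F z 1) x - pd 1 (fun z => F z 0) x := rfl

lemma curl_symm_neg (F : (Fin 3 → ℝ) → Fin 3 → ℂ)
    (h0 : ∀ z, F (refl3 z) 0 = -F z 0)
    (h1 : ∀ z, F (refl3 z) 1 = -F z 1)
    (h2 : ∀ z, F (refl3 z) 2 = F z 2) (z : Fin 3 → ℝ) :
    curl F (refl3 z) 0 = curl F z 0 ∧ curl F (refl3 z) 1 = curl F z 1 ∧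
      curl F (refl3 z) 2 = -curl F z 2 := by
  have e0 : (fun w => F (refl3 w) 0) = fun w => -F w 0 := funext h0
  have e1 : (fun w => F (refl3 w) 1) = fun w => -F w 1 := funext h1
  have e2 : (fun w => F (refl3 w) 2) = fun w => F w 2 := funext h2
  refine ⟨?_, ?_, ?_⟩
  · rw [curl_apply0, curl_apply0, pd_refl_eval, pd_refl_eval]
    simp only [e1, e2, pd_neg]
    norm_num [Fin.ext_iff]
    try ring
  · rw [curl_apply1, curl_apply1, pd_refl_eval, pd_refl_eval]
    simp only [e0, e2, pd_neg]
    norm_num [Fin.ext_iff]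
    try ring
  · rw [curl_apply2, curl_apply2, pd_refl_eval, pd_refl_eval]
    simp only [e0, e1, pd_neg]
    norm_num [Fin.ext_iff]
    try ring

lemma curl_symm_pos (F : (Fin 3 → ℝ) → Fin 3 → ℂ)
    (h0 : ∀ z, F (refl3 z) 0 = F z 0)
    (h1 : ∀ z, F (refl3 z) 1 = F z 1)
    (h2 : ∀ z, F (refl3 z) 2 = -F z 2) (z : Fin 3 → ℝ) :
    curl F (refl3 z) 0 = -curl F z 0 ∧ curl F (refl3 z) 1 = -curl F z 1 := by
  have e0 : (fun w => F (refl3 w) 0) = fun w => F w 0 := funext h0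
  have e1 : (fun w => F (refl3 w) 1) = fun w => F w 1 := funext h1
  have e2 : (fun w => F (refl3 w) 2) = fun w => -F w 2 := funext h2
  refine ⟨?_, ?_⟩
  · rw [curl_apply0, curl_apply0, pd_refl_eval, pd_refl_eval]
    simp only [e1, e2, pd_neg]
    norm_num [Fin.ext_iff]
    try ring
  · rw [curl_apply1, curl_apply1, pd_refl_eval, pd_refl_eval]
    simp only [e0, e2, pd_neg]
    norm_num [Fin.ext_iff]
    try ring

/-- For an electric point current `j` at `y` (with `y₃ ≠ 0`) together with its image
current `j_R = −Rj` at `Ry`, the field `F(x) = G_k(x,y)j + G_k(x,Ry)j_R` has a double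
curl whose tangential part vanishes on the plane `x₃ = 0`. -/
theorem statement11 (k : ℂ) (y : Fin 3 → ℝ) (hy : y 2 ≠ 0) (j : Fin 3 → ℝ)
    (x : Fin 3 → ℝ) (hx : x 2 = 0) :
    curl (curl (fun z i => G k z y * (j i : ℂ) + G k z (refl3 y) * ((-refl3 j) i : ℂ))) x 0 = 0 ∧
      curl (curl (fun z i => G k z y * (j i : ℂ) + G k z (refl3 y) * ((-refl3 j) i : ℂ))) x 1 = 0 := by
  set F : (Fin 3 → ℝ) → Fin 3 → ℂ :=
    fun z i => G k z y * (j i : ℂ) + G k z (refl3 y) * ((-refl3 j) i : ℂ) with hF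
  have key : ∀ (i : Fin 3) (z : Fin 3 → ℝ), F (refl3 z) i =
      G k z (refl3 y) * (j i : ℂ) + G k z y * ((-refl3 j) i : ℂ) := by
    intro i z
    show G k (refl3 z) y * (j i : ℂ) + G k (refl3 z) (refl3 y) * ((-refl3 j) i : ℂ) = _
    rw [G_refl, G_refl, refl3_invol]
  have h0 : ∀ z, F (refl3 z) 0 = -F z 0 := by
    intro z
    rw [key]
    have hj : ((-refl3 j) 0 : ℝ) = -(j 0) := by simp [refl3]
    show G k z (refl3 y) * (j 0 : ℂ) + G k z y * (((-refl3 j) 0 : ℝ) : ℂ) =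
      -(G k z y * (j 0 : ℂ) + G k z (refl3 y) * (((-refl3 j) 0 : ℝ) : ℂ))
    rw [hj]; push_cast; ring
  have h1 : ∀ z, F (refl3 z) 1 = -F z 1 := by
    intro z
    rw [key]
    have hj : ((-refl3 j) 1 : ℝ) = -(j 1) := by simp [refl3]
    show G k z (refl3 y) * (j 1 : ℂ) + G k z y * (((-refl3 j) 1 : ℝ) : ℂ) =
      -(G k z y * (j 1 : ℂ) + G k z (refl3 y) * (((-refl3 j) 1 : ℝ) : ℂ))
    rw [hj]; push_cast; ring
  have h2 : ∀ z, F (refl3 z) 2 = F z 2 := by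
    intro z
    rw [key]
    have hj : ((-refl3 j) 2 : ℝ) = j 2 := by simp [refl3]
    show G k z (refl3 y) * (j 2 : ℂ) + G k z y * (((-refl3 j) 2 : ℝ) : ℂ) =
      G k z y * (j 2 : ℂ) + G k z (refl3 y) * (((-refl3 j) 2 : ℝ) : ℂ)
    rw [hj]; push_cast; ring
  have hc := fun z => curl_symm_neg F h0 h1 h2 z
  have hd := curl_symm_pos (curl F) (fun z => (hc z).1) (fun z => (hc z).2.1)
    (fun z => (hc z).2.2) x
  have hxr : refl3 x = x := by
    funext i; fin_cases i <;> simp [refl3, hx]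
  rw [hxr] at hd
  exact ⟨by linear_combination hd.1 / 2, by linear_combination hd.2 / 2⟩
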